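/- Let n ≥ 1, T > 0, α₁, …, αₙ ∈ (0,1], p > max{1/α_j : j ∈ {1,…,n}}, let f = (f₁,…,fₙ) : ℝⁿ × [0,T] → ℝⁿ be an L^p-Carathéodory function with Lipschitz function ℓ ∈ L^p(0,T), and ξ ∈ ℝⁿ. Set α₀ := min{α_j : j ∈ {1,…,n}} and M := Σ_{j=1}^n T^{α_j − α₀} Γ(α₀)/Γ(α_j), and define T(φ)(t) := ξ + (J^{α_1} f₁(φ(·),·)(t), …, J^{α_n} f_n(φ(·),·)(t)) on C([0,T];ℝⁿ). Then for all continuous φ, ψ : [0,T] → ℝⁿ and all t ∈ [0,T], ‖T(φ)(t) − T(ψ)(t)‖_{ℝⁿ} ≤ J^{α₀}[ M ℓ(·) ‖φ(·) − ψ(·)‖_{ℝⁿ} ](t) = (M/Γ(α₀)) ∫₀ᵗ (t−s)^{α₀−1} ℓ(s) ‖φ(s) − ψ(s)‖_{ℝⁿ} ds. -/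

import Mathlib

open MeasureTheory Real Set

/-- The Riemann–Liouville fractional integral of order `α`:
`J^α g (t) = (1/Γ(α)) ∫₀ᵗ (t-s)^(α-1) g(s) ds`. -/
noncomputable def rlInt {E : Type*} [NormedAddCommGroup E] [NormedSpace ℝ E]
    (α : ℝ) (g : ℝ → E) (t : ℝ) : E :=
  (Real.Gamma α)⁻¹ • ∫ s in (0:ℝ)..t, (t - s) ^ (α - 1) • g s

/-- `f : ℝⁿ × [0,T] → ℝⁿ` is a Carathéodory function: `x ↦ f x t` is continuous for a.e.
`t ∈ [0,T]` and `t ↦ f x t` is Lebesgue measurable for every `x`. -/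
def IsCaratheodory {n : ℕ} (T : ℝ)
    (f : EuclideanSpace ℝ (Fin n) → ℝ → EuclideanSpace ℝ (Fin n)) : Prop :=
  (∀ᵐ t ∂(volume.restrict (Icc (0:ℝ) T)), Continuous fun x => f x t) ∧
  ∀ x, Measurable fun t => f x t

/-- `f` is an `L^p`-Carathéodory function: Carathéodory, with an `L^p` growth bound
`‖f(x,t)‖ ≤ C‖x‖ + γ(t)` and an `L^p` Lipschitz bound `‖f(x,t) - f(y,t)‖ ≤ ℓ(t)‖x - y‖`. -/
def IsLpCaratheodory {n : ℕ} (p T : ℝ)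
    (f : EuclideanSpace ℝ (Fin n) → ℝ → EuclideanSpace ℝ (Fin n)) : Prop :=
  IsCaratheodory T f ∧
  (∃ C > (0:ℝ), ∃ γ : ℝ → ℝ, MemLp γ (ENNReal.ofReal p) (volume.restrict (Icc (0:ℝ) T)) ∧
    ∀ᵐ t ∂(volume.restrict (Icc (0:ℝ) T)), ∀ x, ‖f x t‖ ≤ C * ‖x‖ + γ t) ∧
  (∃ ℓ : ℝ → ℝ, MemLp ℓ (ENNReal.ofReal p) (volume.restrict (Icc (0:ℝ) T)) ∧
    ∀ᵐ t ∂(volume.restrict (Icc (0:ℝ) T)), ∀ x y, ‖f x t - f y t‖ ≤ ℓ t * ‖x - y‖)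

/-- The operator `𝒯(φ)(t) = ξ + (J^{α_1} f₁(φ(·),·)(t), …, J^{α_n} f_n(φ(·),·)(t))`
associated to the fractional system. -/
noncomputable def caraOp {n : ℕ} (α : Fin n → ℝ)
    (f : EuclideanSpace ℝ (Fin n) → ℝ → EuclideanSpace ℝ (Fin n))
    (ξ : EuclideanSpace ℝ (Fin n)) (φ : ℝ → EuclideanSpace ℝ (Fin n)) :
    ℝ → EuclideanSpace ℝ (Fin n) :=
  fun t => ξ + (show EuclideanSpace ℝ (Fin n) from WithLp.toLp 2 (fun j => rlInt (α j) (fun s => f (φ s) s j) t))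

open scoped ENNReal

lemma euc_abs_le {n : ℕ} (x : EuclideanSpace ℝ (Fin n)) (j : Fin n) : |x j| ≤ ‖x‖ := by
  rw [EuclideanSpace.norm_eq, ← Real.sqrt_sq_eq_abs]
  refine Real.sqrt_le_sqrt ?_
  simpa [Real.norm_eq_abs, sq_abs] using
    Finset.single_le_sum (f := fun i => (x i)^2) (fun i _ => sq_nonneg _) (Finset.mem_univ j)

lemma euc_norm_le_sum {n : ℕ} (x : EuclideanSpace ℝ (Fin n)) : ‖x‖ ≤ ∑ j, |x j| := by
  rw [EuclideanSpace.norm_eq]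
  have h1 : ∑ i, ‖x i‖ ^ 2 ≤ (∑ i, |x i|) ^ 2 := by
    simpa [Real.norm_eq_abs] using
      Finset.sum_sq_le_sq_sum_of_nonneg (s := Finset.univ) (f := fun i => |x i|)
        (fun i _ => abs_nonneg _)
  calc Real.sqrt (∑ i, ‖x i‖ ^ 2) ≤ Real.sqrt ((∑ i, |x i|)^2) := Real.sqrt_le_sqrt h1
  _ = ∑ i, |x i| := Real.sqrt_sq (Finset.sum_nonneg fun i _ => abs_nonneg _)

open scoped Classical in
lemma cara_aesm {n : ℕ} {T : ℝ}
    {f : EuclideanSpace ℝ (Fin n) → ℝ → EuclideanSpace ℝ (Fin n)}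
    (hcont : ∀ᵐ t ∂(volume.restrict (Icc (0:ℝ) T)), Continuous fun x => f x t)
    (hmeas : ∀ x, Measurable fun t => f x t)
    {φ : ℝ → EuclideanSpace ℝ (Fin n)} (hφ : Measurable φ) :
    AEStronglyMeasurable (fun s => f (φ s) s) (volume.restrict (Icc (0:ℝ) T)) := by
  set μT := volume.restrict (Icc (0:ℝ) T)
  have hnull : μT {t | ¬ Continuous fun x => f x t} = 0 := hcont
  obtain ⟨B, hBsub, hBmeas, hB0⟩ := exists_measurable_superset_of_null hnull
  set f' : EuclideanSpace ℝ (Fin n) → ℝ → EuclideanSpace ℝ (Fin n) :=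
    fun x t => if t ∈ B then 0 else f x t with hf'
  have hcont' : ∀ t, Continuous fun x => f' x t := by
    intro t
    by_cases ht : t ∈ B
    · simpa [hf', ht] using continuous_const
    · have : t ∉ {t | ¬ Continuous fun x => f x t} := fun h => ht (hBsub h)
      simp only [mem_setOf_eq, not_not] at this
      simpa [hf', ht] using this
  have hmeas' : ∀ x, Measurable fun t => f' x t := fun x =>
    Measurable.ite hBmeas measurable_const (hmeas x)
  have huncurry : Measurable (Function.uncurry f') :=
    measurable_uncurry_of_continuous_of_measurable hcont' hmeas'
  have hcomp : Measurable fun s => f' (φ s) s :=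
    huncurry.comp (hφ.prodMk measurable_id)
  refine hcomp.aestronglyMeasurable.congr ?_
  have : ∀ᵐ s ∂μT, s ∉ B := by rw [ae_iff]; simpa using hB0
  filter_upwards [this] with s hs
  simp [hf', hs]

lemma w_aesm (t β : ℝ) :
    AEStronglyMeasurable (fun s => (t - s) ^ (β - 1)) (volume.restrict (Ioo 0 t)) := by
  refine ContinuousOn.aestronglyMeasurable ?_ measurableSet_Ioo
  refine ContinuousOn.rpow_const (by fun_prop) ?_
  intro s hs
  left
  have := hs.2
  intro h
  nlinarith [sub_eq_zero.mp h]

lemma pow_mul_integrable {p β t : ℝ} (ht : 0 ≤ t) (hβ : 0 < β) (hβ1 : β ≤ 1) (hp : 1 / β < p)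
    {g : ℝ → ℝ} (hg : MemLp g (ENNReal.ofReal p) (volume.restrict (Ioo 0 t))) :
    IntegrableOn (fun s => (t - s) ^ (β - 1) * g s) (Ioo 0 t) := by
  have hβinv : 1 ≤ 1 / β := by rw [le_div_iff₀ hβ]; nlinarith
  have hp1 : 1 < p := lt_of_le_of_lt hβinv hp
  have hp0 : 0 < p := by linarith
  have hpβ : p⁻¹ < β := by
    have := (div_lt_iff₀ hβ).mp hp
    rw [inv_lt_iff_one_lt_mul₀ hp0]
    nlinarith
  set q : ℝ := (1 - p⁻¹)⁻¹ with hq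
  have hpinv1 : p⁻¹ < 1 := by rw [inv_lt_one_iff₀]; right; exact hp1
  have hq0 : 0 < q := by
    have : (0:ℝ) < 1 - p⁻¹ := by linarith
    positivity
  have hr : (-1:ℝ) < (β - 1) * q := by
    have h1 : (0:ℝ) < 1 - p⁻¹ := by linarith
    have h2 : q * (1 - p⁻¹) = 1 := inv_mul_cancel₀ (by linarith)
    nlinarith [mul_pos hq0 h1]
  set w : ℝ → ℝ := fun s => (t - s) ^ (β - 1) with hw
  have hwm : AEStronglyMeasurable w (volume.restrict (Ioo 0 t)) := w_aesm t β
  have hint : IntegrableOn (fun s => (t - s) ^ ((β - 1) * q)) (Ioo 0 t) := by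
    have h1 : IntervalIntegrable (fun x : ℝ => x ^ ((β - 1) * q)) volume 0 t :=
      intervalIntegral.intervalIntegrable_rpow' hr
    have h2 := (h1.comp_sub_left t).symm
    simp only [sub_zero, sub_self] at h2
    rw [intervalIntegrable_iff_integrableOn_Ioc_of_le ht] at h2
    exact h2.mono_set Ioo_subset_Ioc_self
  have hwq : MemLp w (ENNReal.ofReal q) (volume.restrict (Ioo 0 t)) := by
    have hqne : ENNReal.ofReal q ≠ 0 := by simp [ENNReal.ofReal_eq_zero]; linarith
    have hqnetop : ENNReal.ofReal q ≠ ⊤ := ENNReal.ofReal_ne_top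
    refine (memLp_norm_rpow_iff hwm hqne hqnetop).mp ?_
    rw [ENNReal.div_self hqne hqnetop, memLp_one_iff_integrable]
    refine hint.congr_fun ?_ measurableSet_Ioo |>.mono_measure le_rfl
    intro s hs
    have h0 : (0:ℝ) < t - s := by linarith [hs.2]
    simp only []
    rw [ENNReal.toReal_ofReal hq0.le, Real.norm_eq_abs,
      abs_of_nonneg (Real.rpow_nonneg h0.le (β-1)), ← Real.rpow_mul h0.le]
  have hsum : (1 : ℝ≥0∞) / 1 = 1 / ENNReal.ofReal q + 1 / ENNReal.ofReal p := by
    rw [one_div, one_div, one_div, ← ENNReal.ofReal_inv_of_pos hq0,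
      ← ENNReal.ofReal_inv_of_pos hp0, hq, inv_inv,
      ← ENNReal.ofReal_add (by linarith) (by positivity)]
    norm_num
  haveI : ENNReal.HolderTriple (ENNReal.ofReal q) (ENNReal.ofReal p) 1 :=
    ⟨by simpa only [one_div] using hsum.symm⟩
  have := hg.smul (φ := w) (r := 1) hwq
  rw [memLp_one_iff_integrable] at this
  exact this


set_option maxHeartbeats 1000000 in
/-- With `α₀ = min α_j` and `M = Σ_j T^(α_j-α₀) Γ(α₀)/Γ(α_j)`, the operator `𝒯` satisfies
`‖𝒯(φ)(t) - 𝒯(ψ)(t)‖ ≤ J^{α₀}[M ℓ(·) ‖φ(·)-ψ(·)‖](t)` for continuous `φ, ψ` and `t ∈ [0,T]`,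
where `ℓ` is the Lipschitz function of the `L^p`-Carathéodory function `f`. -/
theorem caraOp_contraction_estimate
    (n : ℕ) (hn : 1 ≤ n) (T : ℝ) (hT : 0 < T)
    (α : Fin n → ℝ) (hα : ∀ j, α j ∈ Ioc (0:ℝ) 1)
    (p : ℝ) (hp : ∀ j, 1 / α j < p)
    (f : EuclideanSpace ℝ (Fin n) → ℝ → EuclideanSpace ℝ (Fin n))
    (hcar : IsCaratheodory T f)
    (hgrowth : ∃ C > (0:ℝ), ∃ γ : ℝ → ℝ,
      MemLp γ (ENNReal.ofReal p) (volume.restrict (Icc (0:ℝ) T)) ∧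
      ∀ᵐ t ∂(volume.restrict (Icc (0:ℝ) T)), ∀ x, ‖f x t‖ ≤ C * ‖x‖ + γ t)
    (ℓ : ℝ → ℝ) (hℓ : MemLp ℓ (ENNReal.ofReal p) (volume.restrict (Icc (0:ℝ) T)))
    (hlip : ∀ᵐ t ∂(volume.restrict (Icc (0:ℝ) T)), ∀ x y, ‖f x t - f y t‖ ≤ ℓ t * ‖x - y‖)
    (ξ : EuclideanSpace ℝ (Fin n))
    (α₀ M : ℝ) (hα₀ : α₀ = ⨅ j, α j)
    (hM : M = ∑ j, T ^ (α j - α₀) * Real.Gamma α₀ / Real.Gamma (α j)) :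
    ∀ φ ψ : ℝ → EuclideanSpace ℝ (Fin n),
      ContinuousOn φ (Icc 0 T) → ContinuousOn ψ (Icc 0 T) →
      ∀ t ∈ Icc (0:ℝ) T,
        ‖caraOp α f ξ φ t - caraOp α f ξ ψ t‖ ≤
          rlInt α₀ (fun s => M * ℓ s * ‖φ s - ψ s‖) t := by
  intro φ ψ hφc hψc t ht
  obtain ⟨ht0, htT⟩ := ht
  haveI : Nonempty (Fin n) := ⟨⟨0, hn⟩⟩
  obtain ⟨j₀, hj₀⟩ := Finite.exists_min α
  have hα₀eq : α₀ = α j₀ := by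
    rw [hα₀]
    exact le_antisymm (ciInf_le (Finite.bddBelow_range α) j₀) (le_ciInf hj₀)
  have hα₀pos : 0 < α₀ := hα₀eq ▸ (hα j₀).1
  have hα₀le : ∀ j, α₀ ≤ α j := fun j => hα₀ ▸ ciInf_le (Finite.bddBelow_range α) j
  have hα₀1 : α₀ ≤ 1 := hα₀eq ▸ (hα j₀).2
  have hpα₀ : 1 / α₀ < p := hα₀eq ▸ hp j₀
  have hΓ₀ : 0 < Real.Gamma α₀ := Real.Gamma_pos_of_pos hα₀pos
  have hΓ : ∀ j, 0 < Real.Gamma (α j) := fun j => Real.Gamma_pos_of_pos (hα j).1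
  set μT := volume.restrict (Icc (0:ℝ) T) with hμT
  set μ := volume.restrict (Ioo (0:ℝ) t) with hμ
  have hsub : Ioo (0:ℝ) t ⊆ Icc (0:ℝ) T := fun s hs => ⟨hs.1.le, hs.2.le.trans htT⟩
  have hle : μ ≤ μT := Measure.restrict_mono hsub le_rfl
  haveI : IsFiniteMeasure μ := by
    constructor
    rw [hμ, Measure.restrict_apply_univ]
    simp [Real.volume_Ioo]
  -- clamp function
  set c : ℝ → ℝ := fun s => max 0 (min s T) with hc
  have hcmem : ∀ s, c s ∈ Icc (0:ℝ) T := fun s =>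
    ⟨le_max_left _ _, max_le hT.le (min_le_right _ _)⟩
  have hccont : Continuous c := continuous_const.max (continuous_id.min continuous_const)
  have hceq : ∀ s ∈ Icc (0:ℝ) T, c s = s := by
    intro s hs
    rw [hc]
    simp only [min_eq_left hs.2, max_eq_right hs.1]
  set Φ := fun s => φ (c s) with hΦ
  set Ψ := fun s => ψ (c s) with hΨ
  have hΦc : Continuous Φ := hφc.comp_continuous hccont hcmem
  have hΨc : Continuous Ψ := hψc.comp_continuous hccont hcmem
  obtain ⟨Kφ, hKφ⟩ := isCompact_Icc.exists_bound_of_continuousOn hφc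
  obtain ⟨Kψ, hKψ⟩ := isCompact_Icc.exists_bound_of_continuousOn hψc
  set K : ℝ := max Kφ Kψ with hK
  have hKφ' : ∀ s, ‖Φ s‖ ≤ K := fun s => (hKφ _ (hcmem s)).trans (le_max_left _ _)
  have hKψ' : ∀ s, ‖Ψ s‖ ≤ K := fun s => (hKψ _ (hcmem s)).trans (le_max_right _ _)
  set F := fun s => f (Φ s) s with hF'
  set G := fun s => f (Ψ s) s with hG'
  have hF : AEStronglyMeasurable F μT := cara_aesm hcar.1 hcar.2 hΦc.measurable
  have hG : AEStronglyMeasurable G μT := cara_aesm hcar.1 hcar.2 hΨc.measurable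
  obtain ⟨C, hC, γ, hγp, hγ⟩ := hgrowth
  -- ℓ is a.e. nonneg
  have hℓ0 : ∀ᵐ s ∂μT, 0 ≤ ℓ s := by
    filter_upwards [hlip] with s hs
    have h1 := hs (EuclideanSpace.single ⟨0, hn⟩ (1:ℝ)) 0
    have h2 : ‖EuclideanSpace.single (⟨0, hn⟩ : Fin n) (1:ℝ) - 0‖ = 1 := by
      simp [EuclideanSpace.norm_single]
    rw [h2, mul_one] at h1
    exact le_trans (norm_nonneg _) h1
  -- the function L s = ℓ s * ‖φ s - ψ s‖ is MemLp p on μ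
  have hLmem : MemLp (fun s => ℓ s * ‖φ s - ψ s‖) (ENNReal.ofReal p) μ := by
    have hh : MemLp (fun s => ‖φ s - ψ s‖) ∞ μ := by
      refine memLp_top_of_bound ?_ (Kφ + Kψ) ?_
      · refine ContinuousOn.aestronglyMeasurable ?_ measurableSet_Ioo
        exact ((hφc.mono hsub).sub (hψc.mono hsub)).norm
      · filter_upwards [ae_restrict_mem measurableSet_Ioo] with s hs
        rw [Real.norm_eq_abs, abs_of_nonneg (norm_nonneg _)]
        exact (norm_sub_le _ _).trans (add_le_add (hKφ _ (hsub hs)) (hKψ _ (hsub hs)))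
    have := MemLp.smul (E := ℝ) (𝕜 := ℝ) (r := ENNReal.ofReal p) hh (hℓ.mono_measure hle)
    exact this
  have hγmem : MemLp (fun s => C * K + γ s) (ENNReal.ofReal p) μ :=
    (memLp_const (C * K)).add (hγp.mono_measure hle)
  -- integrability of the weighted components
  have hAint : ∀ (X : ℝ → EuclideanSpace ℝ (Fin n)), AEStronglyMeasurable X μT →
      (∀ᵐ s ∂μT, ‖X s‖ ≤ C * K + γ s) →
      ∀ j : Fin n, IntegrableOn (fun s => (t - s) ^ (α j - 1) * X s j) (Ioo 0 t) := by
    intro X hX hXb j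
    have hdom : IntegrableOn (fun s => (t - s) ^ (α j - 1) * (C * K + γ s)) (Ioo 0 t) :=
      pow_mul_integrable ht0 (hα j).1 (hα j).2 (hp j) hγmem
    refine Integrable.mono' hdom ?_ ?_
    · exact (w_aesm t (α j)).mul
        ((EuclideanSpace.proj j).continuous.comp_aestronglyMeasurable (hX.mono_measure hle))
    · filter_upwards [ae_restrict_mem measurableSet_Ioo, hXb.filter_mono (ae_mono hle)]
        with s hs hXs
      have hw : (0:ℝ) ≤ (t - s) ^ (α j - 1) :=
        Real.rpow_nonneg (by linarith [hs.2]) (α j - 1)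
      rw [Real.norm_eq_abs, abs_mul, abs_of_nonneg hw]
      exact mul_le_mul_of_nonneg_left (le_trans (euc_abs_le (X s) j) hXs) hw
  have hFb : ∀ᵐ s ∂μT, ‖F s‖ ≤ C * K + γ s := by
    filter_upwards [hγ] with s hs
    nlinarith [hs (Φ s), hKφ' s]
  have hGb : ∀ᵐ s ∂μT, ‖G s‖ ≤ C * K + γ s := by
    filter_upwards [hγ] with s hs
    nlinarith [hs (Ψ s), hKψ' s]
  have hAj := hAint F hF hFb
  have hBj := hAint G hG hGb
  have hDj : ∀ j : Fin n,
      IntegrableOn (fun s => (t - s) ^ (α j - 1) * (ℓ s * ‖φ s - ψ s‖)) (Ioo 0 t) := fun j =>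
    pow_mul_integrable ht0 (hα j).1 (hα j).2 (hp j) hLmem
  have hD0 : IntegrableOn (fun s => (t - s) ^ (α₀ - 1) * (ℓ s * ‖φ s - ψ s‖)) (Ioo 0 t) :=
    pow_mul_integrable ht0 hα₀pos hα₀1 hpα₀ hLmem
  -- key identity for each component
  have key : ∀ j : Fin n,
      rlInt (α j) (fun s => f (φ s) s j) t - rlInt (α j) (fun s => f (ψ s) s j) t
        = (Real.Gamma (α j))⁻¹ *
            ∫ s in Ioo (0:ℝ) t, (t - s) ^ (α j - 1) * (F s j - G s j) := by
    intro j
    have e1 : ∫ s in Ioo (0:ℝ) t, (t - s) ^ (α j - 1) • f (φ s) s j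
        = ∫ s in Ioo (0:ℝ) t, (t - s) ^ (α j - 1) * F s j := by
      refine setIntegral_congr_fun measurableSet_Ioo fun s hs => ?_
      simp only [hF', hΦ, hceq s (hsub hs), smul_eq_mul]
    have e2 : ∫ s in Ioo (0:ℝ) t, (t - s) ^ (α j - 1) • f (ψ s) s j
        = ∫ s in Ioo (0:ℝ) t, (t - s) ^ (α j - 1) * G s j := by
      refine setIntegral_congr_fun measurableSet_Ioo fun s hs => ?_
      simp only [hG', hΨ, hceq s (hsub hs), smul_eq_mul]
    rw [rlInt, rlInt, intervalIntegral.integral_of_le ht0, intervalIntegral.integral_of_le ht0,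
      ← setIntegral_congr_set (Ioo_ae_eq_Ioc (a := (0:ℝ)) (b := t)),
      ← setIntegral_congr_set (Ioo_ae_eq_Ioc (a := (0:ℝ)) (b := t)),
      e1, e2, smul_eq_mul, smul_eq_mul, ← mul_sub, ← integral_sub (hAj j) (hBj j)]
    congr 1
    refine integral_congr_ae (Filter.Eventually.of_forall fun s => ?_)
    simp [mul_sub]
  set I : ℝ := ∫ s in Ioo (0:ℝ) t, (t - s) ^ (α₀ - 1) * (ℓ s * ‖φ s - ψ s‖) with hI
  have hv : caraOp α f ξ φ t - caraOp α f ξ ψ t =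
      (show EuclideanSpace ℝ (Fin n) from
        WithLp.toLp 2 (fun j => rlInt (α j) (fun s => f (φ s) s j) t
          - rlInt (α j) (fun s => f (ψ s) s j) t)) := by
    rw [caraOp, caraOp, add_sub_add_left_eq_sub]
    rfl
  have hest : ∀ j : Fin n,
      |rlInt (α j) (fun s => f (φ s) s j) t - rlInt (α j) (fun s => f (ψ s) s j) t|
        ≤ (Real.Gamma (α j))⁻¹ * (T ^ (α j - α₀) * I) := by
    intro j
    rw [key j, abs_mul, abs_inv, abs_of_pos (hΓ j)]
    refine mul_le_mul_of_nonneg_left ?_ (inv_nonneg.mpr (hΓ j).le)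
    have h1 : |∫ s in Ioo (0:ℝ) t, (t - s) ^ (α j - 1) * (F s j - G s j)|
        ≤ ∫ s in Ioo (0:ℝ) t, (t - s) ^ (α j - 1) * (ℓ s * ‖φ s - ψ s‖) := by
      rw [← Real.norm_eq_abs]
      refine norm_integral_le_of_norm_le (hDj j) ?_
      filter_upwards [ae_restrict_mem measurableSet_Ioo, hlip.filter_mono (ae_mono hle)]
        with s hs hl
      have hw : (0:ℝ) ≤ (t - s) ^ (α j - 1) := Real.rpow_nonneg (by linarith [hs.2]) _
      rw [Real.norm_eq_abs, abs_mul, abs_of_nonneg hw]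
      refine mul_le_mul_of_nonneg_left ?_ hw
      have h2 : |F s j - G s j| ≤ ‖F s - G s‖ := by
        simpa using euc_abs_le (F s - G s) j
      refine h2.trans ?_
      have h4 : Φ s = φ s := by rw [hΦ]; simp only [hceq s (hsub hs)]
      have h5 : Ψ s = ψ s := by rw [hΨ]; simp only [hceq s (hsub hs)]
      calc ‖F s - G s‖ ≤ ℓ s * ‖Φ s - Ψ s‖ := hl (Φ s) (Ψ s)
      _ = ℓ s * ‖φ s - ψ s‖ := by rw [h4, h5]
    refine h1.trans ?_
    have h6 : ∫ s in Ioo (0:ℝ) t, (t - s) ^ (α j - 1) * (ℓ s * ‖φ s - ψ s‖)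
        ≤ ∫ s in Ioo (0:ℝ) t, T ^ (α j - α₀) * ((t - s) ^ (α₀ - 1) * (ℓ s * ‖φ s - ψ s‖)) := by
      refine integral_mono_ae (hDj j) (hD0.const_mul _) ?_
      filter_upwards [ae_restrict_mem measurableSet_Ioo, hℓ0.filter_mono (ae_mono hle)]
        with s hs hl0
      have hts : 0 < t - s := by linarith [hs.2]
      have htsT : t - s ≤ T := by linarith [hs.1, htT]
      have hwcomp : (t - s) ^ (α j - 1) ≤ T ^ (α j - α₀) * (t - s) ^ (α₀ - 1) := by
        have he : (t - s) ^ (α j - 1) = (t - s) ^ (α j - α₀) * (t - s) ^ (α₀ - 1) := by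
          rw [← Real.rpow_add hts]
          ring_nf
        rw [he]
        refine mul_le_mul_of_nonneg_right ?_ (Real.rpow_nonneg hts.le _)
        exact Real.rpow_le_rpow hts.le htsT (by linarith [hα₀le j])
      have hL0 : 0 ≤ ℓ s * ‖φ s - ψ s‖ := mul_nonneg hl0 (norm_nonneg _)
      calc (t - s) ^ (α j - 1) * (ℓ s * ‖φ s - ψ s‖)
          ≤ (T ^ (α j - α₀) * (t - s) ^ (α₀ - 1)) * (ℓ s * ‖φ s - ψ s‖) :=
            mul_le_mul_of_nonneg_right hwcomp hL0
      _ = T ^ (α j - α₀) * ((t - s) ^ (α₀ - 1) * (ℓ s * ‖φ s - ψ s‖)) := by ring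
    rw [integral_const_mul] at h6
    exact h6
  rw [hv]
  calc ‖(show EuclideanSpace ℝ (Fin n) from
        WithLp.toLp 2 (fun j => rlInt (α j) (fun s => f (φ s) s j) t
          - rlInt (α j) (fun s => f (ψ s) s j) t))‖
      ≤ ∑ j, |rlInt (α j) (fun s => f (φ s) s j) t - rlInt (α j) (fun s => f (ψ s) s j) t| :=
        euc_norm_le_sum _
  _ ≤ ∑ j, (Real.Gamma (α j))⁻¹ * (T ^ (α j - α₀) * I) :=
        Finset.sum_le_sum fun j _ => hest j
  _ = rlInt α₀ (fun s => M * ℓ s * ‖φ s - ψ s‖) t := by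
      rw [rlInt, intervalIntegral.integral_of_le ht0,
        ← setIntegral_congr_set (Ioo_ae_eq_Ioc (a := (0:ℝ)) (b := t))]
      have hpull : ∫ s in Ioo (0:ℝ) t, (t - s) ^ (α₀ - 1) • (M * ℓ s * ‖φ s - ψ s‖)
          = M * I := by
        rw [hI, ← integral_const_mul]
        refine setIntegral_congr_fun measurableSet_Ioo fun s hs => ?_
        simp only [smul_eq_mul]
        ring
      rw [hpull, smul_eq_mul, hM]
      have hcoef : ∀ j : Fin n,
          (Real.Gamma (α j))⁻¹ * (T ^ (α j - α₀) * I)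
            = T ^ (α j - α₀) * Real.Gamma α₀ / Real.Gamma (α j) * ((Real.Gamma α₀)⁻¹ * I) := by
        intro j
        field_simp [hΓ₀.ne', (hΓ j).ne']
      simp_rw [hcoef]
      rw [← Finset.sum_mul]
      ring
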